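/- Let v be a place of a number field K and Ω_v the completion of an algebraic closure of K_v. Let N be an integer, α ∈ Ω_v, and T ∈ Ω_v[x] with deg T ≤ N. Define U_v(N, α, T) = inf{ν_v(T − f) : f ∈ Ω_v[x], f(α) = 0, deg f ≤ N}. Then U_v(N, α, T) = log|T(α)|_v − N·log⁺|α|_v (with both sides equal to −∞ if T(α) = 0). -/

import Mathlib

open Polynomial

/-- Extended-real logarithm: `⊥` on nonpositive reals. -/
noncomputable def elog (x : ℝ) : EReal := if x ≤ 0 then ⊥ else (Real.log x : EReal)

/-- The logarithmic local supremum norm (w.r.t. the normalized absolute value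
`|x|_v = ‖x‖ ^ e`) of a polynomial on the unit circle, valued in `EReal`. -/
noncomputable def nuv {Ω : Type*} [NormedField Ω] (e : ℝ) (g : Polynomial Ω) : EReal :=
  elog (sSup ((fun z => ‖g.eval z‖ ^ e) '' {z : Ω | ‖z‖ = 1}))

lemma ULSN.nnnorm_multiset_prod' {Ω : Type*} [NormedField Ω] (m : Multiset Ω) :
    ‖m.prod‖₊ = (m.map fun x => ‖x‖₊).prod := by
  refine Multiset.induction_on m (by simp) ?_
  intro a s ih
  simp [nnnorm_mul, ih]

lemma ULSN.nnnorm_sub_le_max' {Ω : Type*} [SeminormedAddCommGroup Ω] [IsUltrametricDist Ω]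
    (a b : Ω) : ‖a - b‖₊ ≤ max ‖a‖₊ ‖b‖₊ := by
  simpa [sub_eq_add_neg] using IsUltrametricDist.nnnorm_add_le_max a (-b)

lemma ULSN.key_ultra {Ω : Type*} [NontriviallyNormedField Ω] [IsUltrametricDist Ω] [IsAlgClosed Ω]
    (N : ℕ) (g : Polynomial Ω) (hg : g.natDegree ≤ N) (β : Ω) :
    ∃ z : Ω, ‖z‖ = 1 ∧ ‖g.eval β‖ ≤ ‖g.eval z‖ * max 1 ‖β‖ ^ N := by
  classical
  rcases eq_or_ne g 0 with rfl | hg0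
  · exact ⟨1, norm_one, by simp [le_of_eq, Real.zero_rpow]⟩
  set R := g.roots with hR
  have hfac : g = C g.leadingCoeff * (R.map fun a => X - C a).prod :=
    Splits.eq_prod_roots (IsAlgClosed.splits g)
  have hcard : Multiset.card R ≤ N := (g.card_roots').trans hg
  set s := R.filter (fun r => ‖r‖₊ ≤ 1) with hs
  set P : Polynomial Ω := X * (s.map fun r => X - C r).prod with hP
  have hPd : P.natDegree = 1 + Multiset.card s := by
    rw [hP, monic_X.natDegree_mul (monic_multiset_prod_of_monic _ _ fun r _ => monic_X_sub_C r),
      natDegree_multiset_prod_X_sub_C_eq_card, natDegree_X]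
  have hQd : (P - C 1).natDegree = 1 + Multiset.card s := by rw [natDegree_sub_C, hPd]
  have h0 : P - C 1 ≠ 0 := fun h => by rw [h, natDegree_zero] at hQd; omega
  have hQdeg : (P - C 1).degree ≠ 0 := by
    intro hc
    rw [degree_eq_natDegree h0, hQd] at hc
    have : 1 + Multiset.card s = 0 := by exact_mod_cast hc
    omega
  obtain ⟨z, hz⟩ := IsAlgClosed.exists_root _ hQdeg
  have hzeq : z * (Multiset.map (fun r => z - r) s).prod = 1 := by
    have h := hz
    rw [IsRoot, eval_sub, eval_mul, eval_X, eval_C, eval_multiset_prod, Multiset.map_map,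
      sub_eq_zero] at h
    simpa [Function.comp, eval_sub, eval_X, eval_C] using h
  have hzn : ‖z‖₊ * (Multiset.map (fun r => ‖z - r‖₊) s).prod = 1 := by
    have h := congrArg (fun x : Ω => ‖x‖₊) hzeq
    simp only [nnnorm_mul, nnnorm_one, ULSN.nnnorm_multiset_prod', Multiset.map_map] at h
    simpa [Function.comp] using h
  have hfle : ∀ r ∈ s, ‖r‖₊ ≤ 1 := fun r hr => (Multiset.mem_filter.mp hr).2
  have hzle : ‖z‖₊ ≤ 1 := by
    by_contra h
    push_neg at h
    have hge : ∀ x ∈ s.map fun r => ‖z - r‖₊, 1 ≤ x := by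
      rintro x hx
      obtain ⟨r, hr, rfl⟩ := Multiset.mem_map.mp hx
      have h1 : ‖z‖₊ ≤ max ‖z - r‖₊ ‖r‖₊ := by
        simpa [sub_add_cancel] using IsUltrametricDist.nnnorm_add_le_max (z - r) r
      have h2 : (1 : NNReal) < max ‖z - r‖₊ ‖r‖₊ := lt_of_lt_of_le h h1
      rcases lt_max_iff.mp h2 with h' | h'
      · exact h'.le
      · exact absurd h' (not_lt.mpr (hfle r hr))
    have : (1 : NNReal) < 1 := by
      calc (1:NNReal) < ‖z‖₊ := h
      _ = ‖z‖₊ * 1 := (mul_one _).symm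
      _ ≤ ‖z‖₊ * (s.map fun r => ‖z - r‖₊).prod :=
          mul_le_mul_right (Multiset.one_le_prod_of_one_le hge) _
      _ = 1 := hzn
    exact absurd this (lt_irrefl _)
  have hfacle : ∀ r ∈ s, ‖z - r‖₊ ≤ 1 := fun r hr =>
    (ULSN.nnnorm_sub_le_max' z r).trans (max_le hzle (hfle r hr))
  have hprodle : (s.map fun r => ‖z - r‖₊).prod ≤ 1 := by
    refine (Multiset.prod_le_pow_card _ 1 ?_).trans (by simp)
    rintro x hx
    obtain ⟨r, hr, rfl⟩ := Multiset.mem_map.mp hx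
    exact hfacle r hr
  have hz1 : ‖z‖₊ = 1 := le_antisymm hzle (by
    calc (1:NNReal) = ‖z‖₊ * (s.map fun r => ‖z - r‖₊).prod := hzn.symm
    _ ≤ ‖z‖₊ * 1 := mul_le_mul_right hprodle _
    _ = ‖z‖₊ := mul_one _)
  have hfac1 : ∀ r ∈ s, 1 ≤ ‖z - r‖₊ := by
    intro r hr
    have hmem := Multiset.cons_erase hr
    have hrest : ((s.erase r).map fun t => ‖z - t‖₊).prod ≤ 1 := by
      refine (Multiset.prod_le_pow_card _ 1 ?_).trans (by simp)
      rintro x hx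
      obtain ⟨t, ht, rfl⟩ := Multiset.mem_map.mp hx
      exact hfacle t (Multiset.mem_of_mem_erase ht)
    have hs' : (Multiset.map (fun t => ‖z - t‖₊) s).prod
        = ‖z - r‖₊ * (Multiset.map (fun t => ‖z - t‖₊) (s.erase r)).prod := by
      conv_lhs => rw [← hmem]
      rw [Multiset.map_cons, Multiset.prod_cons]
    calc (1:NNReal) = ‖z‖₊ * (s.map fun t => ‖z - t‖₊).prod := hzn.symm
    _ = ‖z‖₊ * (‖z - r‖₊ * ((s.erase r).map fun t => ‖z - t‖₊).prod) := by rw [hs']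
    _ ≤ 1 * (‖z - r‖₊ * 1) := mul_le_mul hz1.le (mul_le_mul_right hrest _) zero_le zero_le_one
    _ = ‖z - r‖₊ := by ring
  set M := max 1 ‖β‖₊ with hM
  have hMfac : ∀ r ∈ R, ‖β - r‖₊ ≤ ‖z - r‖₊ * M := by
    intro r hr
    have hb : ‖β - r‖₊ ≤ max ‖β‖₊ ‖r‖₊ := ULSN.nnnorm_sub_le_max' β r
    by_cases h1 : ‖r‖₊ ≤ 1
    · have hrs : r ∈ s := Multiset.mem_filter.mpr ⟨hr, h1⟩
      calc ‖β - r‖₊ ≤ max ‖β‖₊ ‖r‖₊ := hb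
      _ ≤ M := max_le (le_max_right _ _) (h1.trans (le_max_left _ _))
      _ = 1 * M := (one_mul _).symm
      _ ≤ ‖z - r‖₊ * M := mul_le_mul_left (hfac1 r hrs) _
    · push_neg at h1
      have hzr : ‖r‖₊ ≤ ‖z - r‖₊ := by
        have h2 : ‖r‖₊ ≤ max ‖r - z‖₊ ‖z‖₊ := by
          simpa [sub_add_cancel] using IsUltrametricDist.nnnorm_add_le_max (r - z) z
        have h4 : ‖r‖₊ ≤ ‖r - z‖₊ := by
          rcases le_max_iff.mp h2 with h' | h'
          · exact h'
          · exact absurd (h'.trans_eq hz1) (not_le.mpr h1)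
        have h5 : ‖r - z‖₊ = ‖z - r‖₊ := by rw [← nnnorm_neg, neg_sub]
        rwa [h5] at h4
      calc ‖β - r‖₊ ≤ max ‖β‖₊ ‖r‖₊ := hb
      _ ≤ ‖r‖₊ * M := by
          refine max_le ?_ (le_mul_of_one_le_right zero_le (le_max_left _ _))
          calc ‖β‖₊ ≤ M := le_max_right _ _
          _ = 1 * M := (one_mul _).symm
          _ ≤ ‖r‖₊ * M := mul_le_mul_left h1.le _
      _ ≤ ‖z - r‖₊ * M := mul_le_mul_left hzr _
  have heval : ∀ x : Ω, ‖g.eval x‖₊ = ‖g.leadingCoeff‖₊ * (R.map fun r => ‖x - r‖₊).prod := by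
    intro x
    conv_lhs => rw [hfac]
    rw [eval_mul, eval_C, nnnorm_mul, eval_multiset_prod, Multiset.map_map,
      ULSN.nnnorm_multiset_prod', Multiset.map_map]
    refine congrArg _ (congrArg _ (Multiset.map_congr rfl fun r _ => ?_))
    simp [Function.comp]
  have hmain : ‖g.eval β‖₊ ≤ ‖g.eval z‖₊ * M ^ N := by
    rw [heval β, heval z]
    have h1 : (R.map fun r => ‖β - r‖₊).prod ≤ (R.map fun r => ‖z - r‖₊ * M).prod :=
      Multiset.prod_map_le_prod_map _ _ hMfac
    have h2 : (R.map fun r => ‖z - r‖₊ * M).prod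
        = (R.map fun r => ‖z - r‖₊).prod * M ^ Multiset.card R := by
      rw [Multiset.prod_map_mul]
      congr 1
      rw [Multiset.map_const', Multiset.prod_replicate]
    have h3 : M ^ Multiset.card R ≤ M ^ N := pow_le_pow_right' (le_max_left _ _) hcard
    calc ‖g.leadingCoeff‖₊ * (R.map fun r => ‖β - r‖₊).prod
        ≤ ‖g.leadingCoeff‖₊ * ((R.map fun r => ‖z - r‖₊).prod * M ^ Multiset.card R) :=
          mul_le_mul_right (h1.trans_eq h2) _
      _ ≤ ‖g.leadingCoeff‖₊ * ((R.map fun r => ‖z - r‖₊).prod * M ^ N) :=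
          mul_le_mul_right (mul_le_mul_right h3 _) _
      _ = ‖g.leadingCoeff‖₊ * (R.map fun r => ‖z - r‖₊).prod * M ^ N := by ring
  refine ⟨z, by rw [← coe_nnnorm, hz1, NNReal.coe_one], ?_⟩
  have h := NNReal.coe_le_coe.mpr hmain
  simpa [NNReal.coe_mul, NNReal.coe_pow, hM] using h

lemma ULSN.keyC (N : ℕ) (p : Polynomial ℂ) (hp : p.natDegree ≤ N) (β : ℂ) :
    ∃ w : ℂ, ‖w‖ = 1 ∧ ‖p.eval β‖ ≤ ‖p.eval w‖ * max 1 ‖β‖ ^ N := by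
  have mm : ∀ (q : Polynomial ℂ) (C : ℝ) (x : ℂ), ‖x‖ ≤ 1 →
      (∀ y : ℂ, ‖y‖ = 1 → ‖q.eval y‖ ≤ C) → ‖q.eval x‖ ≤ C := by
    intro q C x hx hC
    refine Complex.norm_le_of_forall_mem_frontier_norm_le
      (Metric.isBounded_ball (x := (0:ℂ)) (r := 1)) q.differentiable.diffContOnCl ?_ ?_
    · intro y hy
      rw [frontier_ball (0:ℂ) one_ne_zero] at hy
      exact hC y (mem_sphere_zero_iff_norm.mp hy)
    · rw [closure_ball (0:ℂ) one_ne_zero]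
      exact mem_closedBall_zero_iff.mpr hx
  obtain ⟨w, hw, hmax⟩ := (isCompact_sphere (0:ℂ) 1).exists_isMaxOn
    ⟨1, by simp [mem_sphere_zero_iff_norm]⟩
    ((continuous_norm.comp (p.continuous_aeval)).continuousOn)
  have hw1 : ‖w‖ = 1 := mem_sphere_zero_iff_norm.mp hw
  have hmax' : ∀ y : ℂ, ‖y‖ = 1 → ‖p.eval y‖ ≤ ‖p.eval w‖ := by
    intro y hy
    have := hmax (mem_sphere_zero_iff_norm.mpr hy)
    simpa using this
  have hpw : 0 ≤ ‖p.eval w‖ := norm_nonneg _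
  refine ⟨w, hw1, ?_⟩
  rcases le_or_gt ‖β‖ 1 with hβ | hβ
  · have h1 : ‖p.eval β‖ ≤ ‖p.eval w‖ := mm p _ β hβ hmax'
    have h2 : (1:ℝ) ≤ max 1 ‖β‖ ^ N := one_le_pow₀ (le_max_left _ _)
    calc ‖p.eval β‖ ≤ ‖p.eval w‖ := h1
    _ = ‖p.eval w‖ * 1 := (mul_one _).symm
    _ ≤ ‖p.eval w‖ * max 1 ‖β‖ ^ N := by exact mul_le_mul_of_nonneg_left h2 hpw
  · have hβ0 : β ≠ 0 := by intro h; rw [h, norm_zero] at hβ; linarith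
    set q : Polynomial ℂ := ∑ i ∈ Finset.range (N+1), C (p.coeff i) * X ^ (N - i) with hq
    have hqe : ∀ u : ℂ, u ≠ 0 → q.eval u = u ^ N * p.eval u⁻¹ := by
      intro u hu
      rw [Polynomial.eval_eq_sum_range' (Nat.lt_succ_of_le hp), Finset.mul_sum]
      simp only [hq, Polynomial.eval_finset_sum, eval_mul, eval_pow, eval_C, eval_X]
      refine Finset.sum_congr rfl fun i hi => ?_
      have hiN : i ≤ N := Nat.lt_succ_iff.mp (Finset.mem_range.mp hi)
      rw [pow_sub₀ u hu hiN, inv_pow]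
      ring
    have h1 : ‖q.eval β⁻¹‖ ≤ ‖p.eval w‖ := by
      refine mm q _ β⁻¹ (by rw [norm_inv]; exact inv_le_one_of_one_le₀ hβ.le) ?_
      intro y hy
      have hy0 : y ≠ 0 := by intro h; rw [h, norm_zero] at hy; norm_num at hy
      rw [hqe y hy0, norm_mul, norm_pow, hy, one_pow, one_mul]
      exact hmax' y⁻¹ (by rw [norm_inv, hy, inv_one])
    have h2 : q.eval β⁻¹ = (β⁻¹) ^ N * p.eval β := by
      rw [hqe β⁻¹ (inv_ne_zero hβ0), inv_inv]
    have h3 : ‖p.eval β‖ = ‖β‖ ^ N * ‖q.eval β⁻¹‖ := by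
      rw [h2, norm_mul, norm_pow, norm_inv, ← mul_assoc, ← mul_pow,
        mul_inv_cancel₀ (by positivity), one_pow, one_mul]
    have h4 : max 1 ‖β‖ = ‖β‖ := max_eq_right hβ.le
    rw [h3, h4]
    calc ‖β‖ ^ N * ‖q.eval β⁻¹‖ ≤ ‖β‖ ^ N * ‖p.eval w‖ :=
      mul_le_mul_of_nonneg_left h1 (by positivity)
    _ = ‖p.eval w‖ * ‖β‖ ^ N := mul_comm _ _

lemma ULSN.key_main {Ω : Type*} [NontriviallyNormedField Ω] [IsAlgClosed Ω]
    (hΩ : IsUltrametricDist Ω ∨ ∃ j : Ω ≃+* ℂ, ∀ x : Ω, ‖j x‖ = ‖x‖)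
    (N : ℕ) (g : Polynomial Ω) (hg : g.natDegree ≤ N) (β : Ω) :
    ∃ z : Ω, ‖z‖ = 1 ∧ ‖g.eval β‖ ≤ ‖g.eval z‖ * max 1 ‖β‖ ^ N := by
  rcases hΩ with h | ⟨j, hj⟩
  · exact ULSN.key_ultra N g hg β
  · have hev : ∀ x : Ω, (g.map (j : Ω →+* ℂ)).eval (j x) = j (g.eval x) := fun x => by
      rw [eval_map]; exact eval₂_hom (f := (j : Ω →+* ℂ)) x
    obtain ⟨w, hw, hb⟩ := ULSN.keyC N (g.map (j : Ω →+* ℂ))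
      (Polynomial.natDegree_map_le.trans hg) (j β)
    refine ⟨j.symm w, ?_, ?_⟩
    · rw [← hj (j.symm w), j.apply_symm_apply]; exact hw
    · have e1 : ‖g.eval β‖ = ‖(g.map (j : Ω →+* ℂ)).eval (j β)‖ := by rw [hev β, hj]
      have e2 : ‖(g.map (j : Ω →+* ℂ)).eval w‖ = ‖g.eval (j.symm w)‖ := by
        conv_lhs => rw [← j.apply_symm_apply w]
        rw [hev, hj]
      rw [hj β] at hb
      rw [e2] at hb
      exact e1 ▸ hb

lemma ULSN.bddAbove_image {Ω : Type*} [NontriviallyNormedField Ω] (e : ℝ) (he : 0 ≤ e)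
    (g : Polynomial Ω) : BddAbove ((fun z => ‖g.eval z‖ ^ e) '' {z : Ω | ‖z‖ = 1}) := by
  refine ⟨(∑ i ∈ Finset.range (g.natDegree + 1), ‖g.coeff i‖) ^ e, ?_⟩
  rintro x ⟨z, hz, rfl⟩
  have hz : ‖z‖ = 1 := hz
  have h1 : ‖g.eval z‖ ≤ ∑ i ∈ Finset.range (g.natDegree + 1), ‖g.coeff i‖ := by
    rw [Polynomial.eval_eq_sum_range]
    refine (norm_sum_le _ _).trans (Finset.sum_le_sum fun i _ => ?_)
    rw [norm_mul, norm_pow, hz, one_pow, mul_one]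
  exact Real.rpow_le_rpow (norm_nonneg _) h1 he

lemma ULSN.S_const {Ω : Type*} [NontriviallyNormedField Ω] (e : ℝ) {g : Polynomial Ω} {v : ℝ}
    (h : ∀ z : Ω, ‖z‖ = 1 → ‖g.eval z‖ = v) :
    sSup ((fun z => ‖g.eval z‖ ^ e) '' {z : Ω | ‖z‖ = 1}) = v ^ e := by
  have himg : (fun z => ‖g.eval z‖ ^ e) '' {z : Ω | ‖z‖ = 1} = {v ^ e} := by
    ext x
    simp only [Set.mem_image, Set.mem_setOf_eq, Set.mem_singleton_iff]
    constructor
    · rintro ⟨z, hz, rfl⟩; rw [h z hz]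
    · rintro rfl; exact ⟨1, norm_one, by rw [h 1 norm_one]⟩
  rw [himg, csSup_singleton]

lemma ULSN.elog_mono {x y : ℝ} (h : x ≤ y) : elog x ≤ elog y := by
  by_cases hx : x ≤ 0
  · simp [elog, hx]
  · have hy : ¬ y ≤ 0 := fun hy => hx (h.trans hy)
    simp only [elog, if_neg hx, if_neg hy, EReal.coe_le_coe_iff]
    exact Real.log_le_log (not_le.mp hx) h

lemma ULSN.elog_pos {x : ℝ} (hx : 0 < x) : elog x = (Real.log x : EReal) :=
  if_neg (not_le.mpr hx)

theorem U_eq_log_sub_N_logPlus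
    {Ω : Type*} [NontriviallyNormedField Ω] [CompleteSpace Ω] [IsAlgClosed Ω]
    (hΩ : IsUltrametricDist Ω ∨ ∃ j : Ω ≃+* ℂ, ∀ x : Ω, ‖j x‖ = ‖x‖)
    (e : ℝ) (he : 0 < e) (he1 : e ≤ 1)
    (N : ℕ) (α : Ω) (T : Polynomial Ω) (hdeg : T.natDegree ≤ N) :
    sInf {x : EReal | ∃ f : Polynomial Ω, f.eval α = 0 ∧ f.natDegree ≤ N ∧
        x = nuv e (T - f)} =
      elog (‖T.eval α‖ ^ e) - ((N : ℝ) * Real.log (max 1 (‖α‖ ^ e)) : ℝ) := by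
  classical
  set c : ℝ := (N : ℝ) * Real.log (max 1 (‖α‖ ^ e)) with hc
  have hK1 : (1:ℝ) ≤ max 1 ‖α‖ := le_max_left _ _
  have hKpos : (0:ℝ) < max 1 ‖α‖ := lt_of_lt_of_le one_pos hK1
  have hKe : max 1 (‖α‖ ^ e) = (max 1 ‖α‖) ^ e := by
    rcases le_total ‖α‖ 1 with h | h
    · rw [max_eq_left (Real.rpow_le_one (norm_nonneg _) h he.le), max_eq_left h, Real.one_rpow]
    · rw [max_eq_right (Real.one_le_rpow h he.le), max_eq_right h]
  apply le_antisymm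
  · -- membership: the value is attained
    apply sInf_le
    by_cases hα : ‖α‖ ≤ 1
    · refine ⟨T - Polynomial.C (T.eval α), by simp, ?_, ?_⟩
      · simpa [Polynomial.natDegree_sub_C] using hdeg
      · have hTf : T - (T - Polynomial.C (T.eval α)) = Polynomial.C (T.eval α) := by ring
        rw [hTf, nuv, ULSN.S_const e (v := ‖T.eval α‖) (fun z _ => by simp)]
        have h0 : max 1 (‖α‖ ^ e) = 1 :=
          max_eq_left (Real.rpow_le_one (norm_nonneg _) hα he.le)
        rw [hc, h0, Real.log_one, mul_zero, EReal.coe_zero, sub_eq_add_neg, neg_zero, add_zero]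
    · push_neg at hα
      have hα0 : α ≠ 0 := by intro h; rw [h, norm_zero] at hα; linarith
      have hαe : max 1 (‖α‖ ^ e) = ‖α‖ ^ e := max_eq_right (Real.one_le_rpow hα.le he.le)
      refine ⟨T - Polynomial.C (T.eval α / α ^ N) * Polynomial.X ^ N, ?_, ?_, ?_⟩
      · simp [div_mul_cancel₀ _ (pow_ne_zero N hα0)]
      · exact (Polynomial.natDegree_sub_le _ _).trans
          (max_le hdeg (Polynomial.natDegree_C_mul_X_pow_le _ _))
      · have hTf : T - (T - Polynomial.C (T.eval α / α ^ N) * Polynomial.X ^ N)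
            = Polynomial.C (T.eval α / α ^ N) * Polynomial.X ^ N := by ring
        have hcon : ∀ z : Ω, ‖z‖ = 1 →
            ‖(Polynomial.C (T.eval α / α ^ N) * Polynomial.X ^ N).eval z‖
              = ‖T.eval α‖ / ‖α‖ ^ N := by
          intro z hz
          rw [eval_mul, eval_C, eval_pow, eval_X, norm_mul, norm_pow, hz, one_pow, mul_one,
            norm_div, norm_pow]
        rw [hTf, nuv, ULSN.S_const e hcon]
        by_cases hT : T.eval α = 0
        · rw [hT, norm_zero, zero_div, Real.zero_rpow he.ne']
          have : elog 0 = ⊥ := if_pos le_rfl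
          rw [this, EReal.bot_sub]
        · have hTpos : (0:ℝ) < ‖T.eval α‖ := norm_pos_iff.mpr hT
          have hαpos : (0:ℝ) < ‖α‖ := lt_trans one_pos hα
          have hvpos : (0:ℝ) < ‖T.eval α‖ / ‖α‖ ^ N := by positivity
          rw [ULSN.elog_pos (Real.rpow_pos_of_pos hvpos e),
            ULSN.elog_pos (Real.rpow_pos_of_pos hTpos e), hc, hαe]
          rw [← EReal.coe_sub]
          congr 1
          rw [Real.log_rpow hvpos, Real.log_rpow hTpos, Real.log_rpow hαpos,
            Real.log_div hTpos.ne' (by positivity), Real.log_pow]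
          ring
  · -- lower bound
    refine le_sInf ?_
    rintro x ⟨f, hf0, hfd, rfl⟩
    by_cases hT : T.eval α = 0
    · rw [hT, norm_zero, Real.zero_rpow he.ne']
      have : elog 0 = ⊥ := if_pos le_rfl
      rw [this, EReal.bot_sub]
      exact bot_le
    · set g := T - f with hgdef
      have hgα : g.eval α = T.eval α := by rw [hgdef, eval_sub, hf0, sub_zero]
      have hgd : g.natDegree ≤ N := (Polynomial.natDegree_sub_le _ _).trans (max_le hdeg hfd)
      obtain ⟨z, hz1, hb⟩ := ULSN.key_main hΩ N g hgd α
      rw [hgα] at hb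
      have hTpos : (0:ℝ) < ‖T.eval α‖ := norm_pos_iff.mpr hT
      have hKN : (0:ℝ) < max 1 ‖α‖ ^ N := by positivity
      have hb2 : ‖T.eval α‖ / max 1 ‖α‖ ^ N ≤ ‖g.eval z‖ := (div_le_iff₀ hKN).mpr hb
      have hb3 : (‖T.eval α‖ / max 1 ‖α‖ ^ N) ^ e ≤ ‖g.eval z‖ ^ e :=
        Real.rpow_le_rpow (by positivity) hb2 he.le
      have hmem : ‖g.eval z‖ ^ e ∈ (fun z => ‖g.eval z‖ ^ e) '' {z : Ω | ‖z‖ = 1} :=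
        ⟨z, hz1, rfl⟩
      have hSup : ‖g.eval z‖ ^ e ≤ sSup ((fun z => ‖g.eval z‖ ^ e) '' {z : Ω | ‖z‖ = 1}) :=
        le_csSup (ULSN.bddAbove_image e he.le g) hmem
      have hv : (0:ℝ) < (‖T.eval α‖ / max 1 ‖α‖ ^ N) ^ e :=
        Real.rpow_pos_of_pos (by positivity) _
      have hchain : elog ((‖T.eval α‖ / max 1 ‖α‖ ^ N) ^ e) ≤ nuv e g :=
        (ULSN.elog_mono hb3).trans (ULSN.elog_mono hSup)
      refine le_trans (le_of_eq ?_) hchain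
      rw [ULSN.elog_pos hv, ULSN.elog_pos (Real.rpow_pos_of_pos hTpos e), hc, hKe,
        ← EReal.coe_sub]
      congr 1
      rw [Real.log_rpow hTpos,
        Real.log_rpow (show (0:ℝ) < ‖T.eval α‖ / max 1 ‖α‖ ^ N by positivity),
        Real.log_rpow hKpos, Real.log_div hTpos.ne' hKN.ne', Real.log_pow]
      ring
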